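/- Fix d ≥ 1 and n ∈ ℕ. Let p⁰ be a probability vector on Fin d, (p_{jk}) a d×d stochastic matrix, (e_{H;j})_{j} an orthonormal basis of ℂ^d, and for each m ∈ {0,…,n} let (e_{O_m;k})_k be an orthonormal basis of ℂ^d. On the (n+1)-fold tensor power of ℂ^d, realized as matrices indexed by functions Fin(n+1) → Fin d, define the density matrix W := Σ_{j₀,…,jₙ} p⁰_{j₀}·p_{j₀j₁}···p_{j_{n−1}jₙ} · ⊗_{m=0}^{n} |e_{H;j_m}⟩⟨e_{H;j_m}|, and for fixed outcomes k₀,…,kₙ the projection Q := ⊗_{m=0}^{n} |e_{O_m;k_m}⟩⟨e_{O_m;k_m}|. Then Trace(W·Q) = Σ_{j₀,…,jₙ} p⁰_{j₀}·p_{j₀j₁}···p_{j_{n−1}jₙ} · ∏_{m=0}^{n} |⟨e_{H;j_m}, e_{O_m;k_m}⟩|². Thus the restriction of a diagonalizable quantum Markov chain to any diagonal subalgebra is a classical hidden Markov process with underlying Markov chain (p⁰, p) and emission probabilities p(O_m = k | H = j) = |⟨e_{H;j}, e_{O_m;k}⟩|². -/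

import Mathlib

open BigOperators

/-- The `(n+1)`-fold tensor product of `d × d` matrices, realized as a matrix indexed by
functions `Fin (n+1) → Fin d`. -/
noncomputable def ntens {d n : ℕ} (A : Fin (n + 1) → Matrix (Fin d) (Fin d) ℂ) :
    Matrix (Fin (n + 1) → Fin d) (Fin (n + 1) → Fin d) ℂ :=
  fun f g => ∏ m, A m (f m) (g m)

/-- The rank-one projection `|u⟩⟨u|` with entries `u_a · conj(u_b)`. -/
noncomputable def proj {d : ℕ} (u : Fin d → ℂ) : Matrix (Fin d) (Fin d) ℂ :=
  fun a b => u a * star (u b)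

/-- The standard inner product `⟨u, v⟩ = Σ_a conj(u_a) v_a` on `ℂ^d`. -/
noncomputable def inprod {d : ℕ} (u v : Fin d → ℂ) : ℂ :=
  ∑ a, star (u a) * v a

lemma trace_ntens_mul {d n : ℕ} (A B : Fin (n + 1) → Matrix (Fin d) (Fin d) ℂ) :
    Matrix.trace (ntens A * ntens B) = ∏ m, Matrix.trace (A m * B m) := by
  have h : ∀ m : Fin (n+1), Matrix.trace (A m * B m)
      = ∑ q : Fin d × Fin d, A m q.1 q.2 * B m q.2 q.1 := by
    intro m
    simp [Matrix.trace, Matrix.mul_apply, Matrix.diag, Fintype.sum_prod_type]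
  have lhs : Matrix.trace (ntens A * ntens B)
      = ∑ fg : (Fin (n+1) → Fin d) × (Fin (n+1) → Fin d),
          ∏ m, A m (fg.1 m) (fg.2 m) * B m (fg.2 m) (fg.1 m) := by
    simp [Matrix.trace, Matrix.mul_apply, Matrix.diag, ntens,
      ← Finset.prod_mul_distrib, Fintype.sum_prod_type]
  rw [lhs]
  simp only [h]
  rw [Finset.prod_univ_sum]
  rw [Fintype.piFinset_univ]
  refine Fintype.sum_equiv (Equiv.arrowProdEquivProdArrow (Fin (n+1)) (fun _ => Fin d) (fun _ => Fin d)).symm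
    _ _ ?_
  intro x
  rfl

lemma trace_proj_mul {d : ℕ} (u v : Fin d → ℂ) :
    Matrix.trace (proj u * proj v) = ((‖inprod u v‖ ^ 2 : ℝ) : ℂ) := by
  have : ((‖inprod u v‖ ^ 2 : ℝ) : ℂ) = inprod u v * star (inprod u v) := by
    rw [Complex.star_def, Complex.mul_conj, Complex.normSq_eq_norm_sq]
  rw [this]
  simp only [inprod, star_sum, star_mul, star_star]
  rw [Finset.sum_mul_sum]
  simp only [Matrix.trace, Matrix.mul_apply, Matrix.diag, proj]
  rw [Finset.sum_comm]
  apply Finset.sum_congr rfl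
  intro b _
  apply Finset.sum_congr rfl
  intro a _
  ring

/-- The restriction of a diagonalizable quantum Markov chain to a diagonal
subalgebra is a classical hidden Markov process: `Trace(W·Q)` equals the hidden Markov joint
probability with chain `(p⁰, p)` and emission probabilities `|⟨e_{H;j}, e_{O_m;k}⟩|²`. -/
theorem stmt12 {d : ℕ} (hd : 1 ≤ d) (n : ℕ)
    (p0 : Fin d → ℝ) (hp0_nonneg : ∀ j, 0 ≤ p0 j) (hp0_sum : ∑ j, p0 j = 1)
    (p : Fin d → Fin d → ℝ)
    (hp_nonneg : ∀ j k, 0 ≤ p j k) (hp_row : ∀ j, ∑ k, p j k = 1)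
    (eH : Fin d → (Fin d → ℂ))
    (heH : ∀ j j', inprod (eH j) (eH j') = if j = j' then 1 else 0)
    (eO : Fin (n + 1) → Fin d → (Fin d → ℂ))
    (heO : ∀ m k k', inprod (eO m k) (eO m k') = if k = k' then 1 else 0)
    (k : Fin (n + 1) → Fin d) :
    Matrix.trace
      ((∑ j : Fin (n + 1) → Fin d,
          ((p0 (j 0) * ∏ m : Fin n, p (j m.castSucc) (j m.succ) : ℝ) : ℂ) •
            ntens (fun m => proj (eH (j m)))) *
        ntens (fun m => proj (eO m (k m)))) =
      ∑ j : Fin (n + 1) → Fin d,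
        ((p0 (j 0) * ∏ m : Fin n, p (j m.castSucc) (j m.succ) : ℝ) : ℂ) *
          ∏ m : Fin (n + 1), ((‖inprod (eH (j m)) (eO m (k m))‖ ^ 2 : ℝ) : ℂ) := by
  rw [Finset.sum_mul, Matrix.trace_sum]
  apply Finset.sum_congr rfl
  intro j _
  rw [smul_mul_assoc, Matrix.trace_smul, trace_ntens_mul, smul_eq_mul]
  congr 1
  exact Finset.prod_congr rfl fun m _ => trace_proj_mul _ _
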